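/- The Demazure operator δ satisfies the twisted Leibniz rule: δ(u·v) = δ(u)·v + s(u)·(δ(v) − v) for all u, v ∈ ℤ[M]. -/

import Mathlib

open AddMonoidAlgebra

noncomputable section

/-- The reflection `λ ↦ λ - c(λ) • α` associated to a root `α` and coroot `c`,
as an additive homomorphism of the weight lattice `M`. -/
def demazureReflection {M : Type*} [AddCommGroup M] (α : M) (c : M →+ ℤ) : M →+ M where
  toFun := fun lam => lam - c lam • α
  map_zero' := by simp
  map_add' := fun x y => by simp only [map_add, add_smul]; abel

/-- The ring endomorphism of the group algebra `ℤ[M]` induced by the reflection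
`s(λ) = λ - c(λ)·α`; it sends `e^λ` to `e^{s(λ)}`. -/
def demazureReflectionAlg {M : Type*} [AddCommGroup M] (α : M) (c : M →+ ℤ) :
    AddMonoidAlgebra ℤ M →+* AddMonoidAlgebra ℤ M :=
  mapDomainRingHom ℤ (demazureReflection α c)

theorem freeFinite_uniqueSums {M : Type*} [AddCommGroup M]
    [Module.Free ℤ M] [Module.Finite ℤ M] : UniqueSums M := by
  let e := (Module.Free.chooseBasis ℤ M).repr
  exact UniqueSums.of_injective_addHom e.toAddMonoidHom.toAddHom e.injective inferInstance

/-- Twisted Leibniz rule: δ(uv) = δ(u)v + s(u)(δ(v) - v). -/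
theorem demazure_twisted_leibniz {M : Type*} [AddCommGroup M]
    [Module.Free ℤ M] [Module.Finite ℤ M]
    (α : M) (hα : α ≠ 0) (c : M →+ ℤ) (hc : c α = 2)
    (δ : AddMonoidAlgebra ℤ M →ₗ[ℤ] AddMonoidAlgebra ℤ M)
    (hδ : ∀ u : AddMonoidAlgebra ℤ M,
      (1 - single (-α) 1) * δ u = u - single (-α) 1 * demazureReflectionAlg α c u) :
    ∀ u v : AddMonoidAlgebra ℤ M,
      δ (u * v) = δ u * v + demazureReflectionAlg α c u * (δ v - v) := by
  have : UniqueSums M := freeFinite_uniqueSums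
  intro u v
  have hne : (1 - single (-α) 1 : AddMonoidAlgebra ℤ M) ≠ 0 := by
    intro h
    have h1 : (single 0 1 : AddMonoidAlgebra ℤ M) = single (-α) 1 := by
      have := sub_eq_zero.mp h
      simpa [AddMonoidAlgebra.one_def] using this
    have := AddMonoidAlgebra.single_inj.mp h1
    simp only [one_ne_zero, and_false, or_false] at this
    exact hα (by simpa using this.1.symm)
  apply mul_left_cancel₀ hne
  rw [mul_add, hδ, ← mul_assoc, hδ]
  set s := demazureReflectionAlg α c
  have hs : s (u * v) = s u * s v := map_mul s u v
  have hv := hδ v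
  calc u * v - single (-α) 1 * s (u * v)
      = (u - single (-α) 1 * s u) * v
        + s u * ((single (-α) 1) * (v - s v)) := by rw [hs]; ring
    _ = (u - single (-α) 1 * s u) * v
        + s u * ((v - single (-α) 1 * s v) - (1 - single (-α) 1) * v) := by ring_nf
    _ = (u - single (-α) 1 * s u) * v
        + s u * ((1 - single (-α) 1) * δ v - (1 - single (-α) 1) * v) := by rw [hv]
    _ = (u - single (-α) 1 * s u) * v + (1 - single (-α) 1) * (s u * (δ v - v)) := by ring
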